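/- Lower bound on the regularization increment under the sparsity equation (equation (eq:homogen_reg)). Let E be a real vector space with a seminorm ‖·‖, let f*, f₀ ∈ E and ρ > 0. Assume that for every ε > 0 there exist v ∈ E with ‖f* − v‖ ≤ ρ/20 and a linear functional z : E → ℝ with z ∈ (∂‖·‖)_v (i.e. ‖v + h‖ − ‖v‖ ≥ z(h) for all h ∈ E) such that z(f₀ − f*) ≥ 4ρ/5 − ε. Then ‖f₀‖ − ‖f*‖ ≥ 7ρ/10. -/
import Mathlib


/-- Lower bound on the regularization increment under the sparsity equation
(equation (eq:homogen_reg)). -/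
theorem regularization_increment_lower_bound
    {E : Type*} [AddCommGroup E] [Module ℝ E]
    (Nrm : Seminorm ℝ E)
    (fstar f₀ : E) (ρ : ℝ) (hρ : 0 < ρ)
    (hsup : ∀ ε > (0 : ℝ), ∃ v : E, Nrm (fstar - v) ≤ ρ / 20 ∧
      ∃ z : E →ₗ[ℝ] ℝ, (∀ h, z h ≤ Nrm (v + h) - Nrm v) ∧
        4 * ρ / 5 - ε ≤ z (f₀ - fstar)) :
    7 * ρ / 10 ≤ Nrm f₀ - Nrm fstar := by
  refine le_of_forall_pos_le_add fun ε hε => ?_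
  obtain ⟨v, hv, z, hz, hzb⟩ := hsup ε hε
  have h1 : z (f₀ - fstar) ≤ Nrm (v + (f₀ - fstar)) - Nrm v := hz _
  have h2 : Nrm (v + (f₀ - fstar)) ≤ Nrm f₀ + Nrm (fstar - v) := by
    have : v + (f₀ - fstar) = f₀ - (fstar - v) := by abel
    rw [this]
    exact (map_sub_le_add Nrm _ _).trans (by rw [map_sub_rev])
  have h3 : Nrm fstar ≤ Nrm v + Nrm (fstar - v) := by
    have h4 : fstar = v + (fstar - v) := by abel
    calc Nrm fstar = Nrm (v + (fstar - v)) := by rw [← h4]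
      _ ≤ _ := map_add_le_add Nrm _ _
  linarith
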